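/- Let (X, τ) be a topological space such that τ ≠ {∅} and (τ, ⊆) satisfies the descending chain condition (every nonempty collection of open sets has a minimal element). Then there exists x ∈ X that is abundant in τ, i.e., there is an injection from {U ∈ τ : x ∉ U} into {U ∈ τ : x ∈ U}. -/
import Mathlib


/-- If `(X, τ)` is a topological space with `τ ≠ {∅}` whose open sets satisfy
DCC, then some `x ∈ X` is abundant in `τ`. -/
theorem stmt_17 {X : Type*} [TopologicalSpace X]
    (hne : {U : Set X | IsOpen U} ≠ {∅})
    (hDCC : ∀ S ⊆ {U : Set X | IsOpen U}, S.Nonempty →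
      ∃ M ∈ S, ∀ V ∈ S, V ⊆ M → V = M) :
    ∃ x : X, ∃ f : {U : Set X // IsOpen U ∧ x ∉ U} → {U : Set X // IsOpen U ∧ x ∈ U},
      Function.Injective f := by
  -- there is a nonempty open set
  have hex : ∃ U : Set X, IsOpen U ∧ U.Nonempty := by
    by_contra h
    push_neg at h
    apply hne
    ext U
    simp only [Set.mem_setOf_eq, Set.mem_singleton_iff]
    constructor
    · intro hU
      by_contra hU'
      exact hU' (by simpa using h U hU)
    · rintro rfl; exact isOpen_empty
  set S : Set (Set X) := {U | IsOpen U ∧ U.Nonempty} with hS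
  obtain ⟨M, hMS, hMin⟩ := hDCC S (fun U hU => hU.1) (by obtain ⟨U, h1, h2⟩ := hex; exact ⟨U, h1, h2⟩)
  obtain ⟨hMopen, x, hxM⟩ := hMS
  -- every open set not containing x is disjoint from M
  have key : ∀ U : Set X, IsOpen U → x ∉ U → U ∩ M = ∅ := by
    intro U hU hxU
    by_contra h
    have hne' : (U ∩ M).Nonempty := Set.nonempty_iff_ne_empty.mpr h
    have := hMin (U ∩ M) ⟨hU.inter hMopen, hne'⟩ Set.inter_subset_right
    have hMU : M ⊆ U := by rw [← this]; exact Set.inter_subset_left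
    exact hxU (hMU hxM)
  refine ⟨x, fun U => ⟨U.1 ∪ M, (U.2.1).union hMopen, Or.inr hxM⟩, ?_⟩
  intro U V h
  have h' : U.1 ∪ M = V.1 ∪ M := congrArg Subtype.val h
  have hU : U.1 ∩ M = ∅ := key U.1 U.2.1 U.2.2
  have hV : V.1 ∩ M = ∅ := key V.1 V.2.1 V.2.2
  have : U.1 = V.1 := by
    have e1 : U.1 = (U.1 ∪ M) \ M := by
      rw [Set.union_diff_right,
        (Set.disjoint_iff_inter_eq_empty.mpr hU).sdiff_eq_left]
    have e2 : V.1 = (V.1 ∪ M) \ M := by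
      rw [Set.union_diff_right,
        (Set.disjoint_iff_inter_eq_empty.mpr hV).sdiff_eq_left]
    rw [e1, e2, h']
  exact Subtype.ext this
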